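/- Let (Fₙ) be an orthonormal basis in B(H,H₀), i.e. Fₙ Fₖ* = δ_{n,k} I_{H₀} for all n, k ∈ ℕ and Σ_{n=1}^∞ ‖Fₙ h‖² = ‖h‖² for all h ∈ H. Then a pair of sequences ((Aₙ),(Ψₙ)) of bounded linear operators from H to H₀ is a factorable weak operator-valued frame in B(H,H₀) if and only if there exist bounded linear operators U, V : H → H such that Aₙ = Fₙ U and Ψₙ = Fₙ V for all n ∈ ℕ, and V*U is bounded invertible on H. -/

import Mathlib

set_option maxHeartbeats 1000000
open scoped InnerProductSpace


noncomputable section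

open ContinuousLinearMap Filter

variable {H H₀ : Type*} [NormedAddCommGroup H] [InnerProductSpace ℂ H] [CompleteSpace H]
  [NormedAddCommGroup H₀] [InnerProductSpace ℂ H₀] [CompleteSpace H₀]

/-- `ℓ²(I, H₀)`: square-summable `H₀`-valued families indexed by `I`. -/
abbrev l2 (I : Type*) (H₀ : Type*) [NormedAddCommGroup H₀] : Type _ :=
  lp (fun _ : I => H₀) 2

/-- The isometry `Lᵢ : H₀ → ℓ²(I,H₀)` sending `h` to the family equal to `h` at index `i`
and `0` elsewhere. -/
def Lop {I : Type*} [DecidableEq I] (i : I) : H₀ →L[ℂ] l2 I H₀ :=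
  LinearMap.mkContinuous
    { toFun := fun h => lp.single 2 i h
      map_add' := by
        intro a b
        apply lp.ext
        funext j
        by_cases hj : j = i
        · subst hj; simp [lp.single_apply_self]
        · simp [lp.single_apply_ne _ _ _ hj, lp.coeFn_add]
      map_smul' := by
        intro c a
        simp [lp.single_smul] }
    1
    (by
      intro h
      simpa using (lp.norm_single (p := 2) (by norm_num) (fun _ : I => h) i).le)

/-- Convergence of the sequence of partial sums `∑_{n < m} f n` to `x` as `m → ∞`. -/
def SeqSum {E : Type*} [AddCommMonoid E] [TopologicalSpace E] (f : ℕ → E) (x : E) : Prop :=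
  Tendsto (fun m => ∑ n ∈ Finset.range m, f n) atTop (nhds x)

section Aux

variable (F : ℕ → H →L[ℂ] H₀)

lemma memlp_F (hFc : ∀ h : H, HasSum (fun n => ‖F n h‖ ^ 2) (‖h‖ ^ 2)) (x : H) :
    Memℓp (fun n => F n x) 2 := by
  apply memℓp_gen
  have := (hFc x).summable
  simpa [Real.rpow_two] using this

def Theta (hFc : ∀ h : H, HasSum (fun n => ‖F n h‖ ^ 2) (‖h‖ ^ 2)) : H →L[ℂ] l2 ℕ H₀ :=
  LinearMap.mkContinuous
    { toFun := fun x => ⟨fun n => F n x, memlp_F F hFc x⟩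
      map_add' := by
        intro a b
        apply lp.ext
        funext n
        simp [lp.coeFn_add]; rfl
      map_smul' := by
        intro c a
        apply lp.ext
        funext n
        simp [lp.coeFn_smul] }
    1
    (by
      intro x
      show ‖(⟨fun n => F n x, memlp_F F hFc x⟩ : l2 ℕ H₀)‖ ≤ 1 * ‖x‖
      have hnorm : ‖(⟨fun n => F n x, memlp_F F hFc x⟩ : l2 ℕ H₀)‖
          = (∑' n, ‖F n x‖ ^ (2:ℝ)) ^ ((1:ℝ)/2) := by
        rw [lp.norm_eq_tsum_rpow (by norm_num)]
        norm_num
      have ht : (∑' n, ‖F n x‖ ^ (2:ℝ)) = ‖x‖ ^ 2 := by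
        simpa [Real.rpow_two] using (hFc x).tsum_eq
      rw [hnorm, ht, ← Real.rpow_natCast ‖x‖ 2, ← Real.rpow_mul (norm_nonneg x)]
      norm_num)

lemma Theta_apply (hFc : ∀ h : H, HasSum (fun n => ‖F n h‖ ^ 2) (‖h‖ ^ 2)) (x : H) (n : ℕ) :
    (Theta F hFc x) n = F n x := rfl

lemma Lop_apply (n : ℕ) (y : H₀) : (Lop n : H₀ →L[ℂ] l2 ℕ H₀) y = lp.single 2 n y := rfl

/-- Strong convergence `∑ Fₙ* Fₙ x → x`. -/
lemma hP (hFortho : ∀ n k : ℕ,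
      F n ∘L adjoint (F k) = if n = k then (1 : H₀ →L[ℂ] H₀) else 0)
    (hFc : ∀ h : H, HasSum (fun n => ‖F n h‖ ^ 2) (‖h‖ ^ 2)) (x : H) :
    SeqSum (fun n => adjoint (F n) (F n x)) x := by
  set P : ℕ → H := fun m => ∑ n ∈ Finset.range m, adjoint (F n) (F n x) with hPdef
  set s : ℕ → ℝ := fun m => ∑ n ∈ Finset.range m, ‖F n x‖ ^ 2 with hsdef
  have hs : Tendsto s atTop (nhds (‖x‖ ^ 2)) := (hFc x).tendsto_sum_nat
  have hinner : ∀ m, (⟪x, P m⟫_ℂ) = ((s m : ℝ) : ℂ) := by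
    intro m
    rw [hPdef]
    simp only [inner_sum]
    rw [hsdef]
    push_cast
    refine Finset.sum_congr rfl fun n _ => ?_
    rw [adjoint_inner_right, inner_self_eq_norm_sq_to_K]
    norm_num
  have hPP : ∀ m, (⟪P m, P m⟫_ℂ) = ((s m : ℝ) : ℂ) := by
    intro m
    rw [hPdef]
    simp only [sum_inner, inner_sum]
    have hterm : ∀ n k : ℕ, (⟪adjoint (F n) (F n x), adjoint (F k) (F k x)⟫_ℂ)
        = if n = k then ((‖F n x‖ : ℂ) ^ 2) else 0 := by
      intro n k
      rw [adjoint_inner_left]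
      have : F n (adjoint (F k) (F k x)) = (F n ∘L adjoint (F k)) (F k x) := rfl
      rw [this, hFortho n k]
      split_ifs with h
      · subst h
        simp [inner_self_eq_norm_sq_to_K]
      · simp
    calc (∑ k ∈ Finset.range m, ∑ n ∈ Finset.range m,
            (⟪adjoint (F n) (F n x), adjoint (F k) (F k x)⟫_ℂ))
        = ∑ k ∈ Finset.range m, ∑ n ∈ Finset.range m,
            (if n = k then ((‖F n x‖ : ℂ) ^ 2) else 0) := by
          exact Finset.sum_congr rfl fun k _ => Finset.sum_congr rfl fun n _ => hterm n k
      _ = ∑ k ∈ Finset.range m, ((‖F k x‖ : ℂ) ^ 2) := by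
          refine Finset.sum_congr rfl fun k hk => ?_
          rw [Finset.sum_ite_eq']
          simp [hk]
      _ = ((s m : ℝ) : ℂ) := by rw [hsdef]; push_cast; ring
  have hdiff : ∀ m, ‖x - P m‖ ^ 2 = ‖x‖ ^ 2 - s m := by
    intro m
    rw [@norm_sub_sq ℂ]
    have h1 : RCLike.re (⟪x, P m⟫_ℂ) = s m := by rw [hinner m]; simp
    have h2 : ‖P m‖ ^ 2 = s m := by
      have := congrArg RCLike.re (hPP m)
      rw [inner_self_eq_norm_sq] at this
      simpa using this
    rw [h1, h2]; ring
  have hsq : Tendsto (fun m => ‖x - P m‖ ^ 2) atTop (nhds 0) := by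
    simp only [hdiff]
    have h0 := hs.const_sub (‖x‖ ^ 2)
    rwa [sub_self] at h0
  have hnrm : Tendsto (fun m => ‖x - P m‖) atTop (nhds 0) := by
    have h := (Real.continuous_sqrt.tendsto 0).comp hsq
    have h' : Tendsto (fun m => Real.sqrt (‖x - P m‖ ^ 2)) atTop (nhds 0) := by
      simpa [Function.comp_def] using h
    exact h'.congr fun m => Real.sqrt_sq (norm_nonneg _)
  have : Tendsto (fun m => ‖P m - x‖) atTop (nhds 0) := by
    simpa [norm_sub_rev] using hnrm
  exact tendsto_iff_norm_sub_tendsto_zero.mpr this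

lemma Theta_comp_adjoint (hFortho : ∀ n k : ℕ,
      F n ∘L adjoint (F k) = if n = k then (1 : H₀ →L[ℂ] H₀) else 0)
    (hFc : ∀ h : H, HasSum (fun n => ‖F n h‖ ^ 2) (‖h‖ ^ 2)) (n : ℕ) :
    Theta F hFc ∘L adjoint (F n) = Lop n := by
  refine ContinuousLinearMap.ext fun y => ?_
  apply lp.ext
  funext k
  have h : F k (adjoint (F n) y) = (F k ∘L adjoint (F n)) y := rfl
  rw [Lop_apply]
  have hL : (⇑(((Theta F hFc) ∘L (adjoint (F n))) y) : ℕ → H₀) k = F k (adjoint (F n) y) := rfl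
  rw [hL, h, hFortho k n]
  by_cases hk : k = n
  · subst hk; simp [lp.single_apply_self]
  · simp [hk, lp.single_apply_ne _ _ _ hk]

lemma adjoint_Lop_Lop (n k : ℕ) (y : H₀) :
    adjoint (Lop n : H₀ →L[ℂ] l2 ℕ H₀) (Lop k y) = if k = n then y else 0 := by
  apply ext_inner_right ℂ
  intro v
  rw [adjoint_inner_left, Lop_apply, Lop_apply, lp.inner_single_left]
  by_cases hk : k = n
  · subst hk; simp [lp.single_apply_self]
  · simp [hk, lp.single_apply_ne _ _ _ hk]

/-- Factorization through `U = Θ* θ`. -/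
lemma factor (hFortho : ∀ n k : ℕ,
      F n ∘L adjoint (F k) = if n = k then (1 : H₀ →L[ℂ] H₀) else 0)
    (hFc : ∀ h : H, HasSum (fun n => ‖F n h‖ ^ 2) (‖h‖ ^ 2))
    (θ : H →L[ℂ] l2 ℕ H₀) (B : ℕ → H →L[ℂ] H₀)
    (hθ : ∀ h, SeqSum (fun n => Lop n (B n h)) (θ h)) (n : ℕ) :
    B n = F n ∘L (adjoint (Theta F hFc) ∘L θ) := by
  ext h
  have hcomp : F n ∘L adjoint (Theta F hFc) = adjoint (Lop n) := by
    rw [← Theta_comp_adjoint F hFortho hFc n, adjoint_comp, adjoint_adjoint]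
  have h1 : Tendsto
      (fun m => adjoint (Lop n : H₀ →L[ℂ] l2 ℕ H₀) (∑ k ∈ Finset.range m, Lop k (B k h)))
      atTop (nhds (adjoint (Lop n : H₀ →L[ℂ] l2 ℕ H₀) (θ h))) :=
    ((adjoint (Lop n : H₀ →L[ℂ] l2 ℕ H₀)).continuous.tendsto _).comp (hθ h)
  have h2 : ∀ m, n < m →
      adjoint (Lop n : H₀ →L[ℂ] l2 ℕ H₀) (∑ k ∈ Finset.range m, Lop k (B k h)) = B n h := by
    intro m hm
    rw [map_sum]
    have : ∀ k ∈ Finset.range m,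
        adjoint (Lop n : H₀ →L[ℂ] l2 ℕ H₀) (Lop k (B k h))
          = if k = n then B k h else 0 := fun k _ => adjoint_Lop_Lop n k (B k h)
    rw [Finset.sum_congr rfl this, Finset.sum_ite_eq']
    simp [Finset.mem_range.mpr hm]
  have h3 : Tendsto
      (fun m => adjoint (Lop n : H₀ →L[ℂ] l2 ℕ H₀) (∑ k ∈ Finset.range m, Lop k (B k h)))
      atTop (nhds (B n h)) := by
    refine Tendsto.congr' ?_ tendsto_const_nhds
    filter_upwards [eventually_gt_atTop n] with m hm
    exact (h2 m hm).symm
  have key := tendsto_nhds_unique h3 h1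
  show B n h = (F n ∘L adjoint (Theta F hFc)) (θ h)
  rw [hcomp]
  exact key

/-- `∑ Ψₙ* Aₙ h → V* U h` when `Aₙ = Fₙ U`, `Ψₙ = Fₙ V`. -/
lemma seqsum_S (hFortho : ∀ n k : ℕ,
      F n ∘L adjoint (F k) = if n = k then (1 : H₀ →L[ℂ] H₀) else 0)
    (hFc : ∀ h : H, HasSum (fun n => ‖F n h‖ ^ 2) (‖h‖ ^ 2))
    (U V : H →L[ℂ] H) (h : H) :
    SeqSum (fun n => adjoint (F n ∘L V) ((F n ∘L U) h)) ((adjoint V ∘L U) h) := by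
  have h1 : Tendsto
      (fun m => adjoint V (∑ n ∈ Finset.range m, adjoint (F n) (F n (U h))))
      atTop (nhds (adjoint V (U h))) :=
    ((adjoint V).continuous.tendsto _).comp (hP F hFortho hFc (U h))
  refine h1.congr fun m => ?_
  rw [map_sum]
  exact Finset.sum_congr rfl fun n _ => by simp [adjoint_comp]

lemma seqsum_theta (hFc : ∀ h : H, HasSum (fun n => ‖F n h‖ ^ 2) (‖h‖ ^ 2)) (x : H) :
    SeqSum (fun n => Lop n (F n x)) (Theta F hFc x) := by
  have h := (lp.hasSum_single (E := fun _ : ℕ => H₀) (p := 2) (by norm_num)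
      (Theta F hFc x)).tendsto_sum_nat
  refine h.congr fun m => ?_
  exact Finset.sum_congr rfl fun n _ => rfl

end Aux

/-- Given an orthonormal basis `(Fₙ)` in `B(H,H₀)`, `((Aₙ),(Ψₙ))` is a
factorable weak OVF iff `Aₙ = Fₙ U`, `Ψₙ = Fₙ V` for bounded `U, V : H → H` with `V*U`
bounded invertible. -/
theorem stmt9 (F : ℕ → H →L[ℂ] H₀)
    (hFortho : ∀ n k : ℕ,
      F n ∘L adjoint (F k) = if n = k then (1 : H₀ →L[ℂ] H₀) else 0)
    (hFcomplete : ∀ h : H, HasSum (fun n => ‖F n h‖ ^ 2) (‖h‖ ^ 2))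
    (A Ψ : ℕ → H →L[ℂ] H₀) :
    (∃ (θA θΨ : H →L[ℂ] l2 ℕ H₀) (S : H →L[ℂ] H),
        (∀ h : H, SeqSum (fun n => Lop n (A n h)) (θA h)) ∧
        (∀ h : H, SeqSum (fun n => Lop n (Ψ n h)) (θΨ h)) ∧
        (∀ h : H, SeqSum (fun n => adjoint (Ψ n) (A n h)) (S h)) ∧
        IsUnit S) ↔
    (∃ U V : H →L[ℂ] H,
        (∀ n : ℕ, A n = F n ∘L U) ∧
        (∀ n : ℕ, Ψ n = F n ∘L V) ∧
        IsUnit (adjoint V ∘L U)) := by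
  constructor
  · rintro ⟨θA, θΨ, S, h1, h2, h3, hS⟩
    set U : H →L[ℂ] H := adjoint (Theta F hFcomplete) ∘L θA with hU
    set V : H →L[ℂ] H := adjoint (Theta F hFcomplete) ∘L θΨ with hV
    have hA : ∀ n, A n = F n ∘L U := fun n => factor F hFortho hFcomplete θA A h1 n
    have hΨ : ∀ n, Ψ n = F n ∘L V := fun n => factor F hFortho hFcomplete θΨ Ψ h2 n
    refine ⟨U, V, hA, hΨ, ?_⟩
    have hSeq : S = adjoint V ∘L U := by
      ext h
      have key := seqsum_S F hFortho hFcomplete U V h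
      have e : (fun n => adjoint (Ψ n) (A n h))
          = fun n => adjoint (F n ∘L V) ((F n ∘L U) h) :=
        funext fun n => by rw [hA n, hΨ n]
      have h3' := h3 h
      rw [e] at h3'
      exact tendsto_nhds_unique h3' key
    rw [← hSeq]
    exact hS
  · rintro ⟨U, V, hA, hΨ, hUnit⟩
    refine ⟨Theta F hFcomplete ∘L U, Theta F hFcomplete ∘L V, adjoint V ∘L U, ?_, ?_, ?_, hUnit⟩
    · intro h
      have e : (fun n => Lop n (A n h)) = fun n => Lop n (F n (U h)) :=
        funext fun n => by rw [hA n]; rfl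
      rw [e]
      exact seqsum_theta F hFcomplete (U h)
    · intro h
      have e : (fun n => Lop n (Ψ n h)) = fun n => Lop n (F n (V h)) :=
        funext fun n => by rw [hΨ n]; rfl
      rw [e]
      exact seqsum_theta F hFcomplete (V h)
    · intro h
      have e : (fun n => adjoint (Ψ n) (A n h))
          = fun n => adjoint (F n ∘L V) ((F n ∘L U) h) :=
        funext fun n => by rw [hA n, hΨ n]
      rw [e]
      exact seqsum_S F hFortho hFcomplete U V h
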